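/- Let u : V → ℝ satisfy the midrange (AMLE) identity u(x) = (min_{y~x}u(y) + max_{y~x}u(y))/2 at every interior vertex of a finite graph G with boundary ∂. Define ũ on the uniform k-subdivision G^(k) by ũ = λu at original vertices (λ > 0) and linear interpolation along subdivided edges. Then ũ satisfies the midrange identity at every interior vertex of G^(k). -/

import Mathlib

private lemma affine_inf' {V : Type*} (s : Finset V) (hs : s.Nonempty)
    (a c : ℝ) (hc : 0 ≤ c) (u : V → ℝ) :
    s.inf' hs (fun z => a + c * u z) = a + c * s.inf' hs u := by
  have := Finset.apply_inf'_eq_inf'_comp (γ := ℝ) hs (f := u) (fun x => a + c * x)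
    (fun x y => by
      rcases le_total x y with h | h
      · rw [min_eq_left h, min_eq_left (by nlinarith)]
      · rw [min_eq_right h, min_eq_right (by nlinarith)])
  simpa [Function.comp] using this.symm

private lemma affine_sup' {V : Type*} (s : Finset V) (hs : s.Nonempty)
    (a c : ℝ) (hc : 0 ≤ c) (u : V → ℝ) :
    s.sup' hs (fun z => a + c * u z) = a + c * s.sup' hs u := by
  have := Finset.comp_sup'_eq_sup'_comp (γ := ℝ) hs (f := u) (fun x => a + c * x)
    (fun x y => by
      rcases le_total x y with h | h
      · rw [max_eq_right h, max_eq_right (by nlinarith)]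
      · rw [max_eq_left h, max_eq_left (by nlinarith)])
  simpa [Function.comp] using this.symm

/-- AMLE midrange equation on the uniform k-subdivision.
`u` satisfies the midrange identity at every interior vertex of `G` (boundary
`B`, nonempty interior neighbor sets).  On the uniform `k`-subdivision, the
function `ũ` equals `λ·u` at original vertices with linear interpolation
along subdivided edges: the `j`-th inserted vertex on the edge from `v` to
`z` carries `interp v z j = λ u v + (j/k)(λ u z − λ u v)`.  Then `ũ`
satisfies the midrange identity at every interior vertex of `G^(k)`:
(a) at each inserted vertex, whose two neighbors sit at path positions
`j−1` and `j+1`, the midrange `(min + max)/2` of the neighbor values equals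
its own value; (b) at each original interior vertex `v`, whose
`G^(k)`-neighbors are the first inserted vertices along its original edges,
the midrange of the neighbor values equals `λ u v`. -/
theorem stmt14_amle_subdivision_equivariance
    {V : Type*} [Fintype V] [DecidableEq V]
    (N : V → Finset V) (hsym : ∀ x y, y ∈ N x ↔ x ∈ N y)
    (B : Finset V)
    (hNne : ∀ x : V, x ∉ B → (N x).Nonempty)
    (u : V → ℝ)
    (hmid : ∀ x : V, (hx : x ∉ B) →
      u x = ((N x).inf' (hNne x hx) u + (N x).sup' (hNne x hx) u) / 2)
    (k : ℕ) (hk : 1 ≤ k)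
    (lam : ℝ) (hlam : 0 < lam)
    (interp : V → V → ℕ → ℝ)
    (hinterp : ∀ v z : V, ∀ j : ℕ,
      interp v z j = lam * u v + ((j : ℝ) / k) * (lam * u z - lam * u v)) :
    -- (a) midrange identity at every inserted vertex
    (∀ v z : V, z ∈ N v → ∀ j : ℕ, 1 ≤ j → j ≤ k - 1 →
      interp v z j =
        (min (interp v z (j - 1)) (interp v z (j + 1))
          + max (interp v z (j - 1)) (interp v z (j + 1))) / 2) ∧
    -- (b) midrange identity at every original interior vertex
    (∀ v : V, (hv : v ∉ B) →
      lam * u v =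
        ((N v).inf' (hNne v hv) (fun z => interp v z 1)
          + (N v).sup' (hNne v hv) (fun z => interp v z 1)) / 2) := by
  have hk0 : (k : ℝ) ≠ 0 := Nat.cast_ne_zero.mpr (by omega)
  constructor
  · intro v z _ j hj1 _
    rw [min_add_max]
    obtain ⟨m, rfl⟩ : ∃ m, j = m + 1 := ⟨j - 1, by omega⟩
    simp only [Nat.add_sub_cancel]
    rw [hinterp, hinterp, hinterp]
    push_cast
    field_simp
    ring
  · intro v hv
    have hfun : ∀ z, interp v z 1 =
        (lam * u v - (lam / k) * u v) + (lam / k) * u z := by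
      intro z; rw [hinterp]; field_simp; ring
    have hc : 0 ≤ lam / k := by positivity
    have h1 : (N v).inf' (hNne v hv) (fun z => interp v z 1)
        = (lam * u v - (lam / k) * u v) + (lam / k) * (N v).inf' (hNne v hv) u := by
      rw [show (fun z => interp v z 1)
          = (fun z => (lam * u v - (lam / k) * u v) + (lam / k) * u z) from funext hfun]
      exact affine_inf' _ _ _ _ hc u
    have h2 : (N v).sup' (hNne v hv) (fun z => interp v z 1)
        = (lam * u v - (lam / k) * u v) + (lam / k) * (N v).sup' (hNne v hv) u := by
      rw [show (fun z => interp v z 1)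
          = (fun z => (lam * u v - (lam / k) * u v) + (lam / k) * u z) from funext hfun]
      exact affine_sup' _ _ _ _ hc u
    have := hmid v hv
    have hsum : (N v).inf' (hNne v hv) u + (N v).sup' (hNne v hv) u = 2 * u v := by
      linarith
    rw [h1, h2]
    linear_combination (-(lam / (2 * (k : ℝ)))) * hsum
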